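/- For channel gain h > 0 define on (0, T] the stationarity function F(t; h) = a/(β + (T−t)) + ((λ+c)/(η·h))·[(N₀/h)·((1 − T·ln 2/(B·R·β·t))·2^{(T−t)/(B·R·β·t)} − 1) − α/β]. If t₁, t₂ ∈ (0, T] satisfy F(t₁; h₁) = 0 and F(t₂; h₂) = 0 for channel gains h₁ ≥ h₂ > 0 (all other parameters identical), then t₁ ≤ t₂. -/

import Mathlib

open Real Set

private lemma phi_anti (u₀ : ℝ) :
    StrictAntiOn (fun u : ℝ => (1 - u) * Real.exp (u - u₀) - 1) (Ici (0:ℝ)) := by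
  apply strictAntiOn_of_deriv_neg (convex_Ici 0)
  · fun_prop
  · intro x hx
    rw [interior_Ici] at hx
    have h1 : HasDerivAt (fun u : ℝ => 1 - u) (-1) x := by
      simpa using (hasDerivAt_id x).const_sub 1
    have h2 : HasDerivAt (fun u : ℝ => Real.exp (u - u₀)) (Real.exp (x - u₀)) x := by
      simpa using ((hasDerivAt_id' x).sub_const u₀).exp
    have hd : HasDerivAt (fun u : ℝ => (1 - u) * Real.exp (u - u₀) - 1)
        ((-1) * Real.exp (x - u₀) + (1 - x) * Real.exp (x - u₀)) x :=
      (h1.mul h2).sub_const 1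
    rw [hd.deriv]
    have he := Real.exp_pos (x - u₀)
    nlinarith [mem_Ioi.mp hx]

/-- If two sensors differ only in their channel gains `h₁ ≥ h₂ > 0` and their
transmission durations satisfy the first-order optimality condition
`F(t; h) = 0` of Problem P2, then `t₁ ≤ t₂`. -/
theorem channel_gain_monotone_transmission
    (lam a c N0 B R β α η T : ℝ)
    (hlam : 0 ≤ lam) (ha : 0 < a) (hc : 0 < c) (hN0 : 0 < N0) (hB : 0 < B)
    (hR : 0 < R) (hβ : 0 < β) (hα : 0 < α) (hη : 0 < η) (hT : 0 < T)
    (F : ℝ → ℝ → ℝ)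
    (hF : ∀ t h, F t h =
      a / (β + (T - t))
        + ((lam + c) / (η * h)) *
          ((N0 / h) *
              ((1 - T * Real.log 2 / (B * R * β * t)) *
                  (2 : ℝ) ^ ((T - t) / (B * R * β * t)) - 1)
            - α / β))
    (h₁ h₂ t₁ t₂ : ℝ)
    (hh₂ : 0 < h₂) (hh : h₁ ≥ h₂)
    (ht₁ : t₁ ∈ Ioc 0 T) (ht₂ : t₂ ∈ Ioc 0 T)
    (hF₁ : F t₁ h₁ = 0) (hF₂ : F t₂ h₂ = 0) :
    t₁ ≤ t₂ := by
  by_contra hcon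
  push_neg at hcon
  obtain ⟨ht₁0, ht₁T⟩ := ht₁
  obtain ⟨ht₂0, ht₂T⟩ := ht₂
  have hh₁ : 0 < h₁ := lt_of_lt_of_le hh₂ hh
  have hBRβ : 0 < B * R * β := by positivity
  have hlog2 : 0 < Real.log 2 := Real.log_pos one_lt_two
  set u₀ : ℝ := Real.log 2 / (B * R * β) with hu₀def
  have hu₀ : 0 < u₀ := by positivity
  set φ : ℝ → ℝ := fun u => (1 - u) * Real.exp (u - u₀) - 1 with hφdef
  have hanti : StrictAntiOn φ (Ici (0:ℝ)) := phi_anti u₀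
  -- rewrite the bracket as φ of u(t)
  have key : ∀ t : ℝ, 0 < t →
      (1 - T * Real.log 2 / (B * R * β * t)) * (2 : ℝ) ^ ((T - t) / (B * R * β * t)) - 1
        = φ (T * Real.log 2 / (B * R * β * t)) := by
    intro t ht
    have h2 : (2 : ℝ) ^ ((T - t) / (B * R * β * t))
        = Real.exp (T * Real.log 2 / (B * R * β * t) - u₀) := by
      rw [Real.rpow_def_of_pos two_pos]
      congr 1
      rw [hu₀def]
      field_simp
    rw [h2]
  rw [hF] at hF₁ hF₂
  rw [key t₁ ht₁0] at hF₁
  rw [key t₂ ht₂0] at hF₂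
  set u₁ : ℝ := T * Real.log 2 / (B * R * β * t₁) with hu₁def
  set u₂ : ℝ := T * Real.log 2 / (B * R * β * t₂) with hu₂def
  have hu₁pos : 0 < u₁ := by positivity
  have hu₂pos : 0 < u₂ := by positivity
  have hu₀u₁ : u₀ ≤ u₁ := by
    rw [hu₀def, hu₁def]
    rw [div_le_div_iff₀ (by positivity) (by positivity)]
    nlinarith [mul_nonneg (mul_pos hlog2 hBRβ).le (sub_nonneg.mpr ht₁T)]
  have hu₁u₂ : u₁ < u₂ := by
    rw [hu₁def, hu₂def]
    apply div_lt_div_of_pos_left (by positivity) (by positivity)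
    nlinarith
  -- φ u₁ is negative
  have hφu₀ : φ u₀ = -u₀ := by simp [hφdef]
  have hφ₁neg : φ u₁ < 0 := by
    have h1 : φ u₁ ≤ φ u₀ :=
      hanti.antitoneOn (mem_Ici.mpr hu₀.le) (mem_Ici.mpr (hu₀.le.trans hu₀u₁)) hu₀u₁
    rw [hφu₀] at h1
    linarith
  have hφ₂₁ : φ u₂ < φ u₁ :=
    hanti (mem_Ici.mpr hu₁pos.le) (mem_Ici.mpr hu₂pos.le) hu₁u₂
  -- set up the A-forms
  set C : ℝ := (lam + c) / η with hCdef
  have hC : 0 < C := by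
    rw [hCdef]; positivity
  have hP₁ : 0 < β + (T - t₁) := by linarith
  have hP₂ : 0 < β + (T - t₂) := by linarith
  have hA₁ : a / (β + (T - t₁)) = (C / h₁) * (α / β + (N0 / h₁) * (-φ u₁)) := by
    rw [hCdef]
    linear_combination hF₁
  have hA₂ : a / (β + (T - t₂)) = (C / h₂) * (α / β + (N0 / h₂) * (-φ u₂)) := by
    rw [hCdef]
    linear_combination hF₂
  have hm₁ : 0 < -φ u₁ := by linarith
  have hm₂ : 0 < -φ u₂ := by linarith
  have step1 : (C / h₁) * (α / β + (N0 / h₁) * (-φ u₁))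
      ≤ (C / h₂) * (α / β + (N0 / h₂) * (-φ u₁)) := by
    gcongr <;> positivity
  have step2 : (C / h₂) * (α / β + (N0 / h₂) * (-φ u₁))
      < (C / h₂) * (α / β + (N0 / h₂) * (-φ u₂)) := by
    have hpos : 0 < C / h₂ := by positivity
    apply mul_lt_mul_of_pos_left _ hpos
    have : N0 / h₂ * (-φ u₁) < N0 / h₂ * (-φ u₂) := by
      apply mul_lt_mul_of_pos_left _ (by positivity)
      linarith
    linarith
  have hAlt : a / (β + (T - t₂)) < a / (β + (T - t₁)) := by
    apply div_lt_div_of_pos_left ha hP₁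
    linarith
  rw [hA₁, hA₂] at hAlt
  linarith
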